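/- Let E/F be a finite tamely ramified extension of nonarchimedean local fields and let β ∈ E^× be minimal over F; set ν = ν_E(β) and e = e(E/F). Then π_F^{−ν} · sr(β)^e is a root of unity of order prime to p and the subfield F(π_F^{−ν} · sr(β)^e) of E equals the subfield E' generated over F by all roots of unity in E of order prime to p (the maximal unramified subextension of E/F); in particular E' ⊆ F[sr(β)]. -/

import Mathlib

noncomputable section

/-- The value group `ℤₘ₀ = WithZero (Multiplicative ℤ)` of a discretely valued field. -/
abbrev Zm0 : Type := WithZero (Multiplicative ℤ)

/-- The normalized additive valuation `ν_K` attached to a `ℤₘ₀`-valued field: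
`ν_K x = n` when `Valued.v x = ofAdd (-n)`, and `ν_K 0 = 0` by convention. -/
def nval (K : Type*) [Field K] [Valued K Zm0] (x : K) : ℤ :=
  if h : (Valued.v x : Zm0) = 0 then 0 else - Multiplicative.toAdd (WithZero.unzero h)

/-- The ring of integers `o_K` of a `ℤₘ₀`-valued field. -/
abbrev ringOfIntegers (K : Type*) [Field K] [Valued K Zm0] : ValuationSubring K :=
  (Valued.v : Valuation K Zm0).valuationSubring

/-- The residue field `k_K`. -/
abbrev residueField (K : Type*) [Field K] [Valued K Zm0] : Type _ :=
  IsLocalRing.ResidueField (ringOfIntegers K)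

/-- `K` is a nonarchimedean local field: complete with respect to its (normalized)
discrete valuation, with finite residue field. -/
class IsNALocalField (K : Type*) [Field K] [Valued K Zm0] : Prop where
  complete : CompleteSpace K
  surj : Function.Surjective (Valued.v : K → Zm0)
  finiteResidueField : Finite (residueField K)

/-- `π` is a uniformizer of `K`, i.e. `ν_K π = 1`. -/
def IsUniformizer (K : Type*) [Field K] [Valued K Zm0] (π : K) : Prop :=
  nval K π = 1

/-- `z` is a root of unity of order prime to `p`. -/
def IsRootOfUnityPrimeTo (p : ℕ) {K : Type*} [Field K] (z : K) : Prop :=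
  ∃ n : ℕ, 0 < n ∧ Nat.Coprime n p ∧ z ^ n = 1

/-- The subgroup `C_E` of `E^×` generated by a chosen uniformizer `π_E` and the
group `μ_{q-1}` of `(q-1)`-st roots of unity in `E`, where `q = #k_E`. -/
def CGroup (E : Type*) [Field E] [Valued E Zm0] (πE : Eˣ) : Subgroup Eˣ :=
  Subgroup.closure ({πE} ∪ {u : Eˣ | u ^ (Nat.card (residueField E) - 1) = 1})

/-- The subfield of `E` generated over `F` by all roots of unity in `E` of order prime
to `p` (the maximal unramified subextension of `E/F`). -/
def unramifiedSubfield (F E : Type*) [Field F] [Field E] [Algebra F E] (p : ℕ) :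
    Subfield E :=
  Subfield.closure (Set.range (algebraMap F E) ∪ {z : E | IsRootOfUnityPrimeTo p z})

/-- `β` is minimal over `F`: `F[β] = E`, `gcd(ν_E β, e(E/F)) = 1`, and the image of
`π_F ^ (-ν_E β) * β ^ e` in the residue field `k_E` generates `k_E` over `k_F`. -/
def IsMinimal (F E : Type*) [Field F] [Valued F Zm0] [Field E] [Valued E Zm0]
    [Algebra F E] (e : ℕ) (πF : F) (ι : residueField F →+* residueField E)
    (β : E) : Prop :=
  Algebra.adjoin F {β} = ⊤ ∧
  Int.gcd (nval E β) e = 1 ∧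
  ∃ y : ringOfIntegers E, (y : E) = algebraMap F E (πF ^ (-(nval E β))) * β ^ e ∧
    Subfield.closure (Set.range ι ∪ {IsLocalRing.residue _ y}) = ⊤


namespace Aux

variable {K : Type*} [Field K] [Valued K Zm0]

lemma val_eq_nval {x : K} (hx : x ≠ 0) :
    Valued.v x = ((Multiplicative.ofAdd (-(nval K x)) : Multiplicative ℤ) : Zm0) := by
  have h : (Valued.v x : Zm0) ≠ 0 := (Valuation.ne_zero_iff _).mpr hx
  rw [nval, dif_neg h, neg_neg, ofAdd_toAdd, WithZero.coe_unzero]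

lemma nval_eq_of_val {x : K} {n : ℤ}
    (h : Valued.v x = ((Multiplicative.ofAdd (-n) : Multiplicative ℤ) : Zm0)) :
    nval K x = n := by
  have hx : x ≠ 0 := by
    intro h0
    rw [h0, map_zero] at h
    exact (WithZero.coe_ne_zero).symm h
  have := val_eq_nval hx
  rw [this] at h
  have := WithZero.coe_inj.mp h
  have := Multiplicative.ofAdd.injective this
  omega

lemma zm0_pow_eq_one {u : Zm0} {n : ℕ} (hn : 0 < n) (h : u ^ n = 1) : u = 1 := by
  have hu : u ≠ 0 := by
    intro h0; rw [h0, zero_pow hn.ne'] at h; exact zero_ne_one h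
  lift u to Multiplicative ℤ using hu
  rw [← WithZero.coe_pow, ← WithZero.coe_one, WithZero.coe_inj] at h
  have : (Multiplicative.toAdd u) * n = 0 := by
    have := congrArg Multiplicative.toAdd h
    simpa [toAdd_pow, mul_comm] using this
  have : Multiplicative.toAdd u = 0 := by
    rcases mul_eq_zero.mp this with h1 | h1
    · exact h1
    · omega
  rw [← ofAdd_toAdd u, this, ofAdd_zero, WithZero.coe_one]

lemma val_rou_eq_one {x : K} {n : ℕ} (hn : 0 < n) (h : x ^ n = 1) :
    Valued.v x = 1 := by
  apply zm0_pow_eq_one hn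
  rw [← map_pow, h, map_one]

lemma nval_eq_zero_of_rou {x : K} {n : ℕ} (hn : 0 < n) (h : x ^ n = 1) :
    nval K x = 0 :=
  nval_eq_of_val (by rw [val_rou_eq_one hn h]; rfl)

lemma rou_ne_zero {x : K} {n : ℕ} (hn : 0 < n) (h : x ^ n = 1) : x ≠ 0 := by
  intro h0; rw [h0, zero_pow hn.ne'] at h; exact zero_ne_one h

/-- membership in the ring of integers -/
lemma mem_rI {x : K} (h : Valued.v x ≤ 1) : x ∈ ringOfIntegers K := h

lemma coe_rI (x : ringOfIntegers K) : Valued.v (x : K) ≤ 1 := x.2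

lemma maxIdeal_iff {x : ringOfIntegers K} :
    x ∈ IsLocalRing.maximalIdeal (ringOfIntegers K) ↔ Valued.v (x : K) < 1 := by
  rw [ValuationSubring.valuation_lt_one_iff]
  exact (Valuation.isEquiv_iff_val_lt_one.mp
    (Valuation.isEquiv_valuation_valuationSubring (Valued.v : Valuation K Zm0))).symm

lemma residue_eq_zero_iff_val {x : ringOfIntegers K} :
    IsLocalRing.residue _ x = 0 ↔ Valued.v (x : K) < 1 := by
  rw [IsLocalRing.residue_eq_zero_iff, maxIdeal_iff]

lemma residue_eq_iff {x y : ringOfIntegers K} :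
    IsLocalRing.residue _ x = IsLocalRing.residue _ y ↔
      Valued.v ((x : K) - (y : K)) < 1 := by
  rw [← sub_eq_zero, ← map_sub, residue_eq_zero_iff_val]
  rfl

lemma val_natCast_le_one (n : ℕ) : Valued.v ((n : K)) ≤ 1 := by
  induction n with
  | zero => simp
  | succ k ih =>
    push_cast
    exact le_trans (Valued.v.map_add _ _) (by simp [ih])

lemma val_intCast_le_one (n : ℤ) : Valued.v ((n : K)) ≤ 1 := by
  rcases Int.eq_nat_or_neg n with ⟨m, rfl | rfl⟩
  · rw [Int.cast_natCast]; exact val_natCast_le_one m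
  · rw [Int.cast_neg, Int.cast_natCast, Valuation.map_neg]; exact val_natCast_le_one m

lemma val_eq_one_of_sub_lt {x : K} (h : Valued.v (x - 1) < 1) : Valued.v x = 1 := by
  have : x = (x - 1) + 1 := by ring
  rw [this, Valuation.map_add_eq_of_lt_right]
  · exact Valued.v.map_one
  · rw [Valued.v.map_one]; exact h

lemma val_geom_sum_le {x y : K} (hx : Valued.v x ≤ 1) (hy : Valued.v y ≤ 1) (n : ℕ) :
    Valued.v (∑ i ∈ Finset.range n, x ^ i * y ^ (n - 1 - i)) ≤ 1 := by
  apply Valuation.map_sum_le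
  intro i _
  rw [map_mul, map_pow, map_pow]
  calc Valued.v x ^ i * Valued.v y ^ (n - 1 - i)
      ≤ 1 * 1 := mul_le_mul' (pow_le_one' hx i) (pow_le_one' hy _)
    _ = 1 := one_mul 1

lemma val_pow_sub_pow_le {x y : K} (hx : Valued.v x ≤ 1) (hy : Valued.v y ≤ 1) (n : ℕ) :
    Valued.v (x ^ n - y ^ n) ≤ Valued.v (x - y) := by
  rw [← geom_sum₂_mul, map_mul]
  calc Valued.v (∑ i ∈ Finset.range n, x ^ i * y ^ (n - 1 - i)) * Valued.v (x - y)
      ≤ 1 * Valued.v (x - y) := mul_le_mul_left (val_geom_sum_le hx hy n) _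
    _ = _ := one_mul _

lemma frobenius_step {x y : K} (hx : Valued.v x ≤ 1) (hy : Valued.v y ≤ 1) (m : ℕ) :
    Valued.v (x ^ m - y ^ m) ≤
      max (Valued.v ((m : K))) (Valued.v (x - y)) * Valued.v (x - y) := by
  rw [← geom_sum₂_mul, map_mul]
  apply mul_le_mul_left
  set S := ∑ i ∈ Finset.range m, x ^ i * y ^ (m - 1 - i) with hS
  have hterm : ∀ i ∈ Finset.range m,
      x ^ i * y ^ (m - 1 - i) = (x ^ i - y ^ i) * y ^ (m - 1 - i) + y ^ (m - 1) := by
    intro i hi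
    have hle : i + (m - 1 - i) = m - 1 := by
      have := Finset.mem_range.mp hi; omega
    rw [sub_mul, ← pow_add, hle]; ring
  have hdecomp : S = (∑ i ∈ Finset.range m, (x ^ i - y ^ i) * y ^ (m - 1 - i))
      + (m : K) * y ^ (m - 1) := by
    rw [hS, Finset.sum_congr rfl hterm, Finset.sum_add_distrib, Finset.sum_const,
      Finset.card_range, nsmul_eq_mul]
  rw [hdecomp]
  refine le_trans (Valued.v.map_add _ _) (max_le ?_ ?_)
  · refine le_trans
      (Valuation.map_sum_le _ (g := Valued.v (x - y)) (fun i _ => ?_)) (le_max_right _ _)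
    rw [map_mul, map_pow]
    calc Valued.v (x ^ i - y ^ i) * Valued.v y ^ (m - 1 - i)
        ≤ Valued.v (x - y) * 1 :=
          mul_le_mul' (val_pow_sub_pow_le hx hy i) (pow_le_one' hy _)
      _ = _ := mul_one _
  · rw [map_mul, map_pow]
    calc Valued.v ((m : K)) * Valued.v y ^ (m - 1)
        ≤ Valued.v ((m : K)) * 1 := mul_le_mul' le_rfl (pow_le_one' hy _)
      _ = Valued.v ((m : K)) := mul_one _
      _ ≤ _ := le_max_left _ _


lemma frob_iter {x y : K} (hx : Valued.v x ≤ 1) (hy : Valued.v y ≤ 1) (p : ℕ) (m : ℕ) :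
    Valued.v (x ^ p ^ m - y ^ p ^ m) ≤
      (max (Valued.v ((p : K))) (Valued.v (x - y))) ^ m * Valued.v (x - y) := by
  set c := max (Valued.v ((p : K))) (Valued.v (x - y)) with hc
  have hd1 : Valued.v (x - y) ≤ 1 :=
    le_trans (Valuation.map_sub _ _ _) (max_le hx hy)
  have hc1 : c ≤ 1 := max_le (val_natCast_le_one p) hd1
  induction m with
  | zero => simpa using le_rfl
  | succ k ih =>
    have hxx : Valued.v (x ^ p ^ k) ≤ 1 := by rw [map_pow]; exact pow_le_one' hx _
    have hyy : Valued.v (y ^ p ^ k) ≤ 1 := by rw [map_pow]; exact pow_le_one' hy _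
    have hbig : Valued.v (x ^ p ^ k - y ^ p ^ k) ≤ c := by
      refine le_trans ih ?_
      calc c ^ k * Valued.v (x - y) ≤ 1 * Valued.v (x - y) :=
            mul_le_mul_left (pow_le_one' hc1 k) _
        _ = Valued.v (x - y) := one_mul _
        _ ≤ c := le_max_right _ _
    have hstep := frobenius_step (K := K) hxx hyy p
    rw [← pow_mul, ← pow_mul, ← pow_succ] at hstep
    refine le_trans hstep ?_
    calc max (Valued.v ((p : K))) (Valued.v (x ^ p ^ k - y ^ p ^ k)) *
          Valued.v (x ^ p ^ k - y ^ p ^ k)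
        ≤ c * (c ^ k * Valued.v (x - y)) :=
          mul_le_mul' (max_le (le_max_left _ _) hbig) ih
      _ = c ^ (k + 1) * Valued.v (x - y) := by rw [← mul_assoc, ← pow_succ']

lemma zm0_pow_small {c : Zm0} (hc : c < 1) (γ : Zm0ˣ) :
    ∃ N : ℕ, ∀ k ≥ N, c ^ k < (γ : Zm0) := by
  rcases eq_or_ne c 0 with rfl | hc0
  · refine ⟨1, fun k hk => ?_⟩
    rw [zero_pow (by omega)]
    exact Units.zero_lt γ
  · lift c to Multiplicative ℤ using hc0
    have hγ0 : (γ : Zm0) ≠ 0 := γ.ne_zero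
    lift (γ : Zm0) to Multiplicative ℤ using hγ0 with g hg
    set a := Multiplicative.toAdd c with ha
    set b := Multiplicative.toAdd g with hb
    have hneg : a < 0 := by
      have := hc
      rw [← WithZero.coe_one, WithZero.coe_lt_coe, ← ofAdd_toAdd c,
        ← ofAdd_zero, Multiplicative.ofAdd_lt] at this
      exact this
    refine ⟨b.natAbs + 1, fun k hk => ?_⟩
    rw [← WithZero.coe_pow, WithZero.coe_lt_coe, ← ofAdd_toAdd (c ^ k),
      ← ofAdd_toAdd g, Multiplicative.ofAdd_lt, toAdd_pow, nsmul_eq_mul]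
    have h1 : (k : ℤ) * a ≤ -(k : ℤ) := by nlinarith [hneg]
    have hk' : (b.natAbs + 1 : ℤ) ≤ (k : ℤ) := by exact_mod_cast hk
    have h2 : -(k : ℤ) < b := by omega
    have h3 : (k : ℤ) * a < b := by omega
    exact h3

lemma val_natCast_lt_one_iff {p : ℕ} (hchar : CharP (residueField K) p) (n : ℕ) :
    Valued.v ((n : K)) < 1 ↔ p ∣ n := by
  have hcoe : (((n : ringOfIntegers K) : K)) = (n : K) := by push_cast; rfl
  rw [← hcoe, ← residue_eq_zero_iff_val, map_natCast]
  exact CharP.cast_eq_zero_iff _ p n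

lemma rou_congr {p n : ℕ} (hp : p.Prime) (hchar : CharP (residueField K) p)
    (hn : 0 < n) (hnp : Nat.Coprime n p) {ξ : K} (hξ : ξ ^ n = 1)
    (hlt : Valued.v (ξ - 1) < 1) : ξ = 1 := by
  by_contra hne
  have hx : ξ - 1 ≠ 0 := sub_ne_zero.mpr hne
  have hv1 : Valued.v ξ = 1 := val_eq_one_of_sub_lt hlt
  have hfac := geom_sum₂_mul ξ 1 n
  have hsum0 : (∑ i ∈ Finset.range n, ξ ^ i * 1 ^ (n - 1 - i)) = 0 := by
    have h0 : (∑ i ∈ Finset.range n, ξ ^ i * 1 ^ (n - 1 - i)) * (ξ - 1) = 0 := by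
      rw [hfac, hξ, one_pow, sub_self]
    exact (mul_eq_zero.mp h0).resolve_right hx
  have hsub : (∑ i ∈ Finset.range n, ξ ^ i * 1 ^ (n - 1 - i)) - (n : K) =
      ∑ i ∈ Finset.range n, (ξ ^ i * 1 ^ (n - 1 - i) - 1) := by
    rw [Finset.sum_sub_distrib, Finset.sum_const, Finset.card_range, nsmul_eq_mul, mul_one]
  have hsmall : Valued.v ((∑ i ∈ Finset.range n, ξ ^ i * 1 ^ (n - 1 - i)) - (n : K)) < 1 := by
    rw [hsub]
    refine Valuation.map_sum_lt _ one_ne_zero (fun i _ => ?_)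
    rw [one_pow, mul_one]
    have : Valued.v (ξ ^ i - 1 ^ i) ≤ Valued.v (ξ - 1) :=
      val_pow_sub_pow_le (le_of_eq hv1) (by simp) i
    rw [one_pow] at this
    exact lt_of_le_of_lt this hlt
  rw [hsum0, zero_sub, Valuation.map_neg] at hsmall
  have hdvd := (val_natCast_lt_one_iff hchar n).mp hsmall
  exact hp.one_lt.ne' (Nat.Coprime.eq_one_of_dvd hnp.symm hdvd)

end Aux

section Topology

variable (F E : Type*) [Field F] [Valued F Zm0] [Field E] [Valued E Zm0]
    [Algebra F E] [FiniteDimensional F E]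

/-- rank-one structure from surjectivity -/
def rankOneOfSurj (hs : Function.Surjective (Valued.v : F → Zm0)) :
    Valuation.RankOne (Valued.v : Valuation F Zm0) where
  hom' := (WithZeroMulInt.toNNReal (by norm_num : (2 : NNReal) ≠ 0)).comp
    MonoidWithZeroHom.ValueGroup₀.embedding
  strictMono' := (WithZeroMulInt.toNNReal_strictMono (by norm_num : (1 : NNReal) < 2)).comp
    MonoidWithZeroHom.ValueGroup₀.embedding_strictMono
  exists_val_nontrivial := by
    obtain ⟨x, hx⟩ := hs ((Multiplicative.ofAdd (-1 : ℤ) : Multiplicative ℤ) : Zm0)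
    refine ⟨x, ?_, ?_⟩
    · rw [hx]; exact WithZero.coe_ne_zero
    · rw [hx, ← WithZero.coe_one, ne_eq, WithZero.coe_inj]
      decide

lemma zm0_exists_pow_lt (γ : Zm0ˣ) (e : ℕ) (he : 0 < e) :
    ∃ δ : Zm0ˣ, ∀ u : Zm0, u < (δ : Zm0) → u ^ e < (γ : Zm0) := by
  have hγ0 : (γ : Zm0) ≠ 0 := γ.ne_zero
  lift (γ : Zm0) to Multiplicative ℤ using hγ0 with g hg
  set m := Multiplicative.toAdd g with hm
  refine ⟨Units.mk0 ((Multiplicative.ofAdd (min m 0) : Multiplicative ℤ) : Zm0)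
    WithZero.coe_ne_zero, fun u hu => ?_⟩
  rcases eq_or_ne u 0 with rfl | hu0
  · rw [zero_pow he.ne']
    exact WithZero.zero_lt_coe g
  · lift u to Multiplicative ℤ using hu0 with c hc
    rw [Units.val_mk0, WithZero.coe_lt_coe] at hu
    rw [← WithZero.coe_pow, WithZero.coe_lt_coe, ← Multiplicative.toAdd_lt, toAdd_pow,
      nsmul_eq_mul]
    rw [← Multiplicative.toAdd_lt, toAdd_ofAdd] at hu
    have h1 : Multiplicative.toAdd c ≤ -1 := by omega
    have h2 : (e : ℤ) * Multiplicative.toAdd c ≤ Multiplicative.toAdd c := by nlinarith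
    have h3 : Multiplicative.toAdd c < Multiplicative.toAdd g := by omega
    omega

lemma closed_submodule
    (hFc : CompleteSpace F) (hFs : Function.Surjective (Valued.v : F → Zm0))
    {e : ℕ} (he : 0 < e)
    (hval : ∀ x : F, Valued.v (algebraMap F E x) = (Valued.v x) ^ e)
    (M : Submodule F E) : IsClosed (M : Set E) := by
  letI := rankOneOfSurj F hFs
  letI : NontriviallyNormedField F := Valued.toNontriviallyNormedField F Zm0
  haveI : CompleteSpace F := hFc
  have hcont : Continuous (algebraMap F E) := by
    apply continuous_of_continuousAt_zero (algebraMap F E)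
    rw [ContinuousAt, map_zero]
    rw [(Valued.hasBasis_nhds_zero E Zm0).tendsto_right_iff]
    intro γ _
    obtain ⟨δ, hδ⟩ := zm0_exists_pow_lt
      (Units.map (MonoidWithZeroHom.ValueGroup₀.embedding : _ →*₀ Zm0).toMonoidHom γ) e he
    have hmem : {x : F | Valued.v x < (δ : Zm0)} ∈ (nhds (0 : F)) := by
      obtain ⟨x0, hx0⟩ := hFs (δ : Zm0)
      have h1 := Valued.isOpen_ball F (Valued.v.restrict x0)
      have h2 : {x : F | Valued.v.restrict x < Valued.v.restrict x0} =
          {x : F | Valued.v x < (δ : Zm0)} := by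
        ext x
        simp only [Set.mem_setOf_eq, Valuation.restrict_lt_iff, hx0]
      rw [h2] at h1
      refine h1.mem_nhds ?_
      show Valued.v (0 : F) < (δ : Zm0)
      rw [map_zero]
      exact Units.zero_lt δ
    filter_upwards [hmem] with x hx
    show Valued.v.restrict (algebraMap F E x) < γ.1
    rw [Valuation.restrict_lt_iff_lt_embedding]
    show Valued.v (algebraMap F E x) <
      ((Units.map (MonoidWithZeroHom.ValueGroup₀.embedding : _ →*₀ Zm0).toMonoidHom γ : Zm0ˣ) : Zm0)
    rw [hval x]
    exact hδ _ hx
  haveI : ContinuousSMul F E := by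
    constructor
    have : Continuous fun p : F × E => algebraMap F E p.1 * p.2 :=
      (hcont.comp continuous_fst).mul continuous_snd
    simpa only [Algebra.smul_def] using this
  exact M.closed_of_finiteDimensional

end Topology

/-- Let `E/F` be a finite tamely ramified extension of nonarchimedean
local fields, `β ∈ E^×` minimal over `F`, `ν = ν_E β`, `e = e(E/F)`, and `s = sr β` the
standard representative of `β`. Then `π_F^{-ν} * (sr β)^e` is a root of unity of order
prime to `p`, the subfield `F(π_F^{-ν} (sr β)^e)` of `E` equals the maximal unramified
subextension `E'` of `E/F`, and in particular `E' ⊆ F[sr β]`. -/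
theorem stmt11 (F E : Type*) [Field F] [Valued F Zm0] [Field E] [Valued E Zm0]
    [Algebra F E] [FiniteDimensional F E]
    (hF : IsNALocalField F) (hE : IsNALocalField E)
    (p : ℕ) (hp : p.Prime) (hchar : CharP (residueField F) p)
    (e : ℕ) (he : 0 < e)
    (hcomp : ∀ x : F, nval E (algebraMap F E x) = e * nval F x)
    (htame : Nat.Coprime e p)
    (πF : F) (hπF : IsUniformizer F πF)
    (πE : Eˣ) (hπE : IsUniformizer E (πE : E))
    (z : E) (hz : IsRootOfUnityPrimeTo p z)
    (hrel : (πE : E) ^ e * z = algebraMap F E πF)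
    (ι : residueField F →+* residueField E)
    (hι : ∀ (x : ringOfIntegers F) (y : ringOfIntegers E),
      (y : E) = algebraMap F E (x : F) →
        ι (IsLocalRing.residue _ x) = IsLocalRing.residue _ y)
    (β : Eˣ) (hβ : IsMinimal F E e πF ι (β : E))
    (s : Eˣ) (hsC : s ∈ CGroup E πE)
    (hsr : Valued.v ((β : E) * ((s : E))⁻¹ - 1) < (1 : Zm0)) :
    IsRootOfUnityPrimeTo p
        (algebraMap F E (πF ^ (-(nval E (β : E)))) * (s : E) ^ e) ∧
    Subfield.closure (Set.range (algebraMap F E) ∪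
        {algebraMap F E (πF ^ (-(nval E (β : E)))) * (s : E) ^ e}) =
      unramifiedSubfield F E p ∧
    ∀ x ∈ unramifiedSubfield F E p, x ∈ Algebra.adjoin F {(s : E)} := by
  classical
  obtain ⟨hadj, hgcd, y, hy, hgen⟩ := hβ
  obtain ⟨nz, hnz, hnzp, hznz⟩ := hz
  haveI : Finite (residueField E) := hE.finiteResidueField
  haveI hcharE : CharP (residueField E) p := charP_of_injective_ringHom ι.injective p
  set q := Nat.card (residueField E) with hq
  set ν := nval E (β : E) with hν
  obtain ⟨f, hcard⟩ : ∃ f : ℕ+, q = p ^ (f : ℕ) := by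
    letI := Fintype.ofFinite (residueField E)
    obtain ⟨n, -, h⟩ := FiniteField.card (residueField E) p
    exact ⟨n, by rw [hq, Nat.card_eq_fintype_card, h]⟩
  have hq2 : 2 ≤ q := by
    letI := Fintype.ofFinite (residueField E)
    rw [hq, Nat.card_eq_fintype_card]
    exact Fintype.one_lt_card
  have hq1pos : 0 < q - 1 := by omega
  have hq1p : Nat.Coprime (q - 1) p := by
    refine Nat.coprime_comm.mp (hp.coprime_iff_not_dvd.mpr ?_)
    intro hdvd
    have hdq : p ∣ q := by rw [hcard]; exact dvd_pow_self p f.pos.ne'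
    have h1 : q - (q - 1) = 1 := by omega
    have := Nat.dvd_sub hdq hdvd
    rw [h1] at this
    exact hp.one_lt.ne' (Nat.dvd_one.mp this)
  -- decompose s
  obtain ⟨a, ζ, hζpow, hsdecomp⟩ :
      ∃ (a : ℤ) (ζ : Eˣ), ζ ^ (q - 1) = 1 ∧ s = πE ^ a * ζ := by
    have hsC' := hsC
    rw [CGroup, Subgroup.closure_union] at hsC'
    have hHsub : Subgroup.closure {u : Eˣ | u ^ (Nat.card (residueField E) - 1) = 1} ≤
        ({ carrier := {u : Eˣ | u ^ (q - 1) = 1},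
           mul_mem' := fun {u v} hu hv => by
             simp only [Set.mem_setOf_eq] at *
             rw [mul_pow, hu, hv, one_mul]
           one_mem' := one_pow _
           inv_mem' := fun {u} hu => by
             simp only [Set.mem_setOf_eq] at *
             rw [inv_pow, hu, inv_one] } : Subgroup Eˣ) := by
      rw [Subgroup.closure_le]
      intro u hu
      exact hu
    have hsup : s ∈ Subgroup.closure {πE} ⊔
        ({ carrier := {u : Eˣ | u ^ (q - 1) = 1},
           mul_mem' := fun {u v} hu hv => by
             simp only [Set.mem_setOf_eq] at *
             rw [mul_pow, hu, hv, one_mul]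
           one_mem' := one_pow _
           inv_mem' := fun {u} hu => by
             simp only [Set.mem_setOf_eq] at *
             rw [inv_pow, hu, inv_one] } : Subgroup Eˣ) :=
      SetLike.le_def.mp (sup_le_sup_left hHsub _) hsC'
    rw [Subgroup.mem_sup] at hsup
    obtain ⟨x, hx, ζ, hζ, hmul⟩ := hsup
    rw [Subgroup.mem_closure_singleton] at hx
    obtain ⟨a, rfl⟩ := hx
    exact ⟨a, ζ, hζ, hmul.symm⟩
  -- basic nonvanishing
  have hβ0 : (β : E) ≠ 0 := Units.ne_zero β
  have hs0 : (s : E) ≠ 0 := Units.ne_zero s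
  have hπE0 : (πE : E) ≠ 0 := Units.ne_zero πE
  have hz0 : z ≠ 0 := Aux.rou_ne_zero hnz hznz
  have hπF0 : πF ≠ 0 := by
    intro h0
    have h1 : nval F πF = 1 := hπF
    rw [h0, nval, dif_pos (map_zero _)] at h1
    exact one_ne_zero h1.symm
  have hA0 : algebraMap F E πF ≠ 0 := (map_ne_zero _).mpr hπF0
  -- coercion form of decomposition
  have hcoe : (s : E) = (πE : E) ^ a * (ζ : E) := by
    rw [hsdecomp, Units.val_mul, Units.val_zpow_eq_zpow_val]
  have hζcoe : (ζ : E) ^ (q - 1) = 1 := by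
    rw [← Units.val_pow_eq_pow_val, hζpow, Units.val_one]
  have hζ0 : (ζ : E) ≠ 0 := Units.ne_zero ζ
  -- valuations
  have hvζ : Valued.v ((ζ : E)) = 1 := Aux.val_rou_eq_one hq1pos hζcoe
  have hvπE : Valued.v ((πE : E)) =
      ((Multiplicative.ofAdd (-1 : ℤ) : Multiplicative ℤ) : Zm0) := by
    have h1 : nval E ((πE : E)) = 1 := hπE
    have := Aux.val_eq_nval hπE0
    rw [h1] at this
    exact this
  have hvβ : Valued.v ((β : E)) =
      ((Multiplicative.ofAdd (-ν) : Multiplicative ℤ) : Zm0) := Aux.val_eq_nval hβ0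
  have hvβs : Valued.v ((β : E) * ((s : E))⁻¹) = 1 := Aux.val_eq_one_of_sub_lt hsr
  have hvs : Valued.v ((s : E)) = Valued.v ((β : E)) := by
    rw [map_mul, map_inv₀] at hvβs
    exact ((mul_inv_eq_one₀ ((Valuation.ne_zero_iff _).mpr hs0)).mp hvβs).symm
  have hvsval : Valued.v ((s : E)) =
      ((Multiplicative.ofAdd (-a) : Multiplicative ℤ) : Zm0) := by
    have hzm : (Multiplicative.ofAdd (-1 : ℤ)) ^ a = Multiplicative.ofAdd (-a) := by
      rw [← ofAdd_zsmul, smul_eq_mul]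
      congr 1
      ring
    rw [hcoe, map_mul, hvζ, mul_one, map_zpow₀, hvπE, ← WithZero.coe_zpow, hzm]
  have ha : a = ν := by
    rw [hvs, hvβ, WithZero.coe_inj] at hvsval
    have := Multiplicative.ofAdd.injective hvsval
    omega
  -- the root of unity g
  have hpe : (πE : E) ^ e = algebraMap F E πF * z⁻¹ := by
    rw [← hrel, mul_assoc, mul_inv_cancel₀ hz0, mul_one]
  have hgval : algebraMap F E (πF ^ (-ν)) * (s : E) ^ e = z ^ (-ν) * (ζ : E) ^ e := by
    have h1 : (s : E) ^ e = (((πE : E) ^ e) ^ ν) * (ζ : E) ^ e := by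
      rw [hcoe, mul_pow, ha]
      congr 1
      rw [← zpow_natCast (((πE : E)) ^ (ν : ℤ)) e, ← zpow_mul,
        ← zpow_natCast ((πE : E)) e, ← zpow_mul]
      congr 1
      ring
    rw [h1, hpe, mul_zpow, inv_zpow, ← zpow_neg, ← map_zpow₀, ← mul_assoc, ← mul_assoc,
      ← map_mul, ← zpow_add₀ hπF0]
    rw [neg_add_cancel, zpow_zero, map_one, one_mul]
  have hgrou : (z ^ (-ν) * (ζ : E) ^ e) ^ (nz * (q - 1)) = 1 := by
    rw [mul_pow]
    have h1 : (z ^ (-ν)) ^ (nz * (q - 1)) = ((z ^ nz) ^ ((-ν) * (q - 1))) := by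
      rw [← zpow_natCast (z ^ (-ν)), ← zpow_mul, ← zpow_natCast z nz, ← zpow_mul]
      congr 1
      push_cast [Nat.cast_sub (by omega : 1 ≤ q)]
      ring
    have h2 : ((ζ : E) ^ e) ^ (nz * (q - 1)) = (((ζ : E) ^ (q - 1)) ^ (e * nz)) := by
      rw [← pow_mul, ← pow_mul]
      congr 1
      ring
    rw [h1, h2, hznz, hζcoe, one_zpow, one_pow, one_mul]
  set g : E := algebraMap F E (πF ^ (-ν)) * (s : E) ^ e with hgdef
  have hgpow : g ^ (nz * (q - 1)) = 1 := by
    rw [hgval]; exact hgrou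
  have hrouG : IsRootOfUnityPrimeTo p g :=
    ⟨nz * (q - 1), Nat.mul_pos hnz hq1pos, Nat.Coprime.mul hnzp hq1p, hgpow⟩
  have hvg : Valued.v g = 1 := Aux.val_rou_eq_one (Nat.mul_pos hnz hq1pos) hgpow
  have hg0 : g ≠ 0 := Aux.rou_ne_zero (Nat.mul_pos hnz hq1pos) hgpow
  have hval : ∀ x : F, Valued.v (algebraMap F E x) = (Valued.v x) ^ e := by
    intro x
    rcases eq_or_ne x 0 with rfl | hx0
    · simp [zero_pow he.ne']
    · have hax : algebraMap F E x ≠ 0 := (map_ne_zero _).mpr hx0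
      rw [Aux.val_eq_nval hax, Aux.val_eq_nval hx0, hcomp x, ← WithZero.coe_pow,
        WithZero.coe_inj, ← ofAdd_nsmul, nsmul_eq_mul]
      congr 1
      push_cast
      ring
  set L : Subfield E := Subfield.closure (Set.range (algebraMap F E) ∪ {g}) with hLdef
  -- residue of g equals residue of y
  have hfactor : g - (y : E) = g * (1 - ((β : E) * (s : E)⁻¹) ^ e) := by
    rw [mul_sub, mul_one, hy, hgdef]
    congr 1
    field_simp
    rw [div_pow, mul_div_cancel₀ _ (pow_ne_zero e hs0)]
  have hvless : Valued.v (1 - ((β : E) * (s : E)⁻¹) ^ e) < 1 := by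
    have h1 : Valued.v ((1 : E) ^ e - ((β : E) * (s : E)⁻¹) ^ e) ≤
        Valued.v (1 - (β : E) * (s : E)⁻¹) :=
      Aux.val_pow_sub_pow_le (by simp) (le_of_eq hvβs) e
    rw [one_pow] at h1
    have h2 : Valued.v ((1 : E) - (β : E) * (s : E)⁻¹) =
        Valued.v ((β : E) * (s : E)⁻¹ - 1) := by
      rw [← Valuation.map_neg]
      congr 1
      ring
    calc Valued.v (1 - ((β : E) * (s : E)⁻¹) ^ e) ≤ Valued.v (1 - (β : E) * (s : E)⁻¹) := h1
      _ = Valued.v ((β : E) * (s : E)⁻¹ - 1) := h2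
      _ < 1 := hsr
  have hvgy : Valued.v (g - (y : E)) < 1 := by
    rw [hfactor, map_mul, hvg, one_mul]
    exact hvless
  set gI : ringOfIntegers E := ⟨g, le_of_eq hvg⟩ with hgI
  have hresg : IsLocalRing.residue _ gI = IsLocalRing.residue _ y :=
    Aux.residue_eq_iff.mpr (by simpa using hvgy)
  -- the subring of residues of integers lying in L
  set A : Subring (ringOfIntegers E) :=
    L.toSubring.comap (ringOfIntegers E).subtype with hA
  set R : Subring (residueField E) := A.map (IsLocalRing.residue (ringOfIntegers E)) with hR
  have hmemA : ∀ u : ringOfIntegers E, (u : E) ∈ L → u ∈ A := by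
    intro u hu
    rw [hA, Subring.mem_comap]
    exact hu
  have hRinv : ∀ x ∈ R, x⁻¹ ∈ R := by
    intro x hx
    rcases eq_or_ne x 0 with rfl | hx0
    · rw [inv_zero]; exact hx
    · letI := Fintype.ofFinite (residueField E)
      have hx1 : x ^ (q - 1) = 1 := by
        rw [hq, Nat.card_eq_fintype_card]
        exact FiniteField.pow_card_sub_one_eq_one x hx0
      have hxi : x⁻¹ = x ^ (q - 2) := by
        have hmul : x * x ^ (q - 2) = 1 := by
          rw [← pow_succ']
          have : q - 2 + 1 = q - 1 := by omega
          rw [this, hx1]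
        exact (eq_inv_of_mul_eq_one_left (by rw [mul_comm] at hmul; exact hmul)).symm
      rw [hxi]
      exact pow_mem hx _
  set R' : Subfield (residueField E) :=
    { toSubring := R, inv_mem' := fun x hx => hRinv x hx } with hR'
  have hgens : Set.range ι ∪ {IsLocalRing.residue _ y} ⊆ (R' : Set (residueField E)) := by
    rintro c (⟨d, rfl⟩ | hc)
    · obtain ⟨x, rfl⟩ := Ideal.Quotient.mk_surjective d
      have hxval : Valued.v (algebraMap F E (x : F)) ≤ 1 := by
        rw [hval]
        exact pow_le_one' x.2 e
      have := hι x ⟨algebraMap F E (x : F), hxval⟩ rfl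
      show ι (IsLocalRing.residue _ x) ∈ R
      rw [this]
      exact ⟨⟨algebraMap F E (x : F), hxval⟩,
        hmemA _ (Subfield.subset_closure (Or.inl ⟨(x : F), rfl⟩)), rfl⟩
    · rw [Set.mem_singleton_iff] at hc
      subst hc
      show IsLocalRing.residue _ y ∈ R
      rw [← hresg]
      exact ⟨gI, hmemA _ (Subfield.subset_closure (Or.inr rfl)), rfl⟩
  have hRtop : ∀ c : residueField E, c ∈ R := by
    intro c
    have h1 : (⊤ : Subfield (residueField E)) ≤ R' := by
      rw [← hgen]
      exact Subfield.closure_le.mpr hgens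
    exact h1 (Subfield.mem_top c)
  -- the key claim: every prime-to-p root of unity lies in L
  have hkey : ∀ w : E, IsRootOfUnityPrimeTo p w → w ∈ L := by
    intro w hw
    obtain ⟨n, hn, hnp, hwn⟩ := hw
    have hw0 : w ≠ 0 := Aux.rou_ne_zero hn hwn
    have hvw : Valued.v w = 1 := Aux.val_rou_eq_one hn hwn
    set wI : ringOfIntegers E := ⟨w, le_of_eq hvw⟩ with hwI
    have hwres0 : IsLocalRing.residue _ wI ≠ 0 := by
      rw [Ne, Aux.residue_eq_zero_iff_val]
      intro hlt
      rw [show ((wI : E)) = w from rfl, hvw] at hlt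
      exact lt_irrefl _ hlt
    have hwq : w ^ (q - 1) = 1 := by
      letI := Fintype.ofFinite (residueField E)
      have hres1 : (IsLocalRing.residue _ wI) ^ (q - 1) = 1 := by
        rw [hq, Nat.card_eq_fintype_card]
        exact FiniteField.pow_card_sub_one_eq_one _ hwres0
      have hlt : Valued.v (w ^ (q - 1) - 1) < 1 := by
        have h2 : IsLocalRing.residue _ (wI ^ (q - 1)) =
            IsLocalRing.residue _ (1 : ringOfIntegers E) := by
          rw [map_pow, hres1, map_one]
        have h3 := Aux.residue_eq_iff.mp h2
        simpa using h3
      refine Aux.rou_congr hp hcharE hn hnp ?_ hlt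
      rw [← pow_mul, mul_comm, pow_mul, hwn, one_pow]
    -- choose an integral element t of L with the same residue as w
    have hmem := hRtop (IsLocalRing.residue _ wI)
    rw [hR, Subring.mem_map] at hmem
    obtain ⟨t, htA, htres⟩ := hmem
    have htL : (t : E) ∈ L := by
      rw [hA, Subring.mem_comap] at htA
      exact htA
    have hvt : Valued.v ((t : E)) ≤ 1 := t.2
    have hdist : Valued.v ((t : E) - w) < 1 := by
      have h3 := Aux.residue_eq_iff.mp htres
      simpa using h3
    have hcp : Valued.v ((p : E)) < 1 := (Aux.val_natCast_lt_one_iff hcharE p).mpr dvd_rfl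
    set c : Zm0 := max (Valued.v ((p : E))) (Valued.v ((t : E) - w)) with hcdef
    have hc : c < 1 := max_lt hcp hdist
    have hc1 : c ≤ 1 := le_of_lt hc
    have hwqk : ∀ k : ℕ, w ^ q ^ k = w := by
      have hwq1 : w ^ q = w := by
        conv_lhs => rw [show q = (q - 1) + 1 by omega]
        rw [pow_succ, hwq, one_mul]
      intro k
      induction k with
      | zero => simp
      | succ j ih => rw [pow_succ, pow_mul, ih, hwq1]
    have hbound : ∀ k : ℕ, Valued.v ((t : E) ^ q ^ k - w) ≤ c ^ k := by
      intro k
      have h0 : q ^ k = p ^ ((f : ℕ) * k) := by rw [hcard, ← pow_mul]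
      have h4 := Aux.frob_iter hvt (le_of_eq hvw) p ((f : ℕ) * k)
      rw [← h0, hwqk k] at h4
      refine le_trans h4 ?_
      calc c ^ ((f : ℕ) * k) * Valued.v ((t : E) - w)
          ≤ c ^ ((f : ℕ) * k) * 1 :=
            mul_le_mul_right (le_trans (le_max_right _ _) hc1) _
        _ = c ^ ((f : ℕ) * k) := mul_one _
        _ ≤ c ^ k := pow_le_pow_right_of_le_one' hc1 (Nat.le_mul_of_pos_left k f.pos)
    -- t lies in the subalgebra generated by g
    have hgint : IsIntegral F g := Algebra.IsIntegral.isIntegral g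
    have hIFsub := IntermediateField.adjoin_simple_toSubalgebra_of_isAlgebraic hgint.isAlgebraic
    have hLle : L ≤ (IntermediateField.adjoin F {g}).toSubfield := by
      apply Subfield.closure_le.mpr
      rintro c' (⟨d, rfl⟩ | hc')
      · exact IntermediateField.algebraMap_mem _ d
      · rw [Set.mem_singleton_iff] at hc'
        subst hc'
        exact IntermediateField.mem_adjoin_simple_self F g
    have htadj : (t : E) ∈ Algebra.adjoin F {g} := by
      have h5 := hLle htL
      rw [IntermediateField.mem_toSubfield] at h5
      have h6 : (t : E) ∈ (IntermediateField.adjoin F {g}).toSubalgebra := h5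
      rw [hIFsub] at h6
      exact h6
    have hclosed : IsClosed ((Subalgebra.toSubmodule (Algebra.adjoin F {g}) :
        Submodule F E) : Set E) :=
      closed_submodule F E hF.complete hF.surj he hval _
    have htend : Filter.Tendsto (fun k : ℕ => (t : E) ^ q ^ k) Filter.atTop (nhds w) := by
      rw [Filter.tendsto_def]
      intro U hU
      rw [Valued.mem_nhds] at hU
      obtain ⟨γ, hγ⟩ := hU
      obtain ⟨N, hN⟩ := Aux.zm0_pow_small hc
        (Units.map (MonoidWithZeroHom.ValueGroup₀.embedding : _ →*₀ Zm0).toMonoidHom γ)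
      refine Filter.mem_of_superset (Filter.mem_atTop N) ?_
      intro k hk
      apply hγ
      show Valued.v.restrict ((t : E) ^ q ^ k - w) < γ.1
      rw [Valuation.restrict_lt_iff_lt_embedding]
      exact lt_of_le_of_lt (hbound k) (hN k hk)
    have hwmem : w ∈ ((Subalgebra.toSubmodule (Algebra.adjoin F {g}) :
        Submodule F E) : Set E) := by
      refine hclosed.mem_of_tendsto htend (Filter.Eventually.of_forall fun k => ?_)
      show (t : E) ^ q ^ k ∈ Subalgebra.toSubmodule (Algebra.adjoin F {g})
      exact pow_mem htadj _
    -- back into L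
    have hadjle : ∀ x : E, x ∈ Algebra.adjoin F {g} → x ∈ L := by
      intro x hx
      have h1 : x ∈ (Algebra.adjoin F {g}).toSubring := hx
      rw [Algebra.adjoin_eq_ring_closure] at h1
      have h2 : Subring.closure (Set.range (algebraMap F E) ∪ {g}) ≤ L.toSubring :=
        Subring.closure_le.mpr Subfield.subset_closure
      exact h2 h1
    exact hadjle w hwmem
  -- conjunct 2
  have heq : L = unramifiedSubfield F E p := by
    apply le_antisymm
    · apply Subfield.closure_le.mpr
      rintro c' (hc' | hc')
      · exact Subfield.subset_closure (Or.inl hc')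
      · rw [Set.mem_singleton_iff] at hc'
        subst hc'
        exact Subfield.subset_closure (Or.inr hrouG)
    · rw [unramifiedSubfield]
      apply Subfield.closure_le.mpr
      rintro w (hw | hw)
      · exact Subfield.subset_closure (Or.inl hw)
      · exact hkey w hw
  refine ⟨hrouG, heq, ?_⟩
  -- conjunct 3
  intro x hx
  rw [← heq] at hx
  have hsint : IsIntegral F ((s : E)) := Algebra.IsIntegral.isIntegral _
  have hIFs := IntermediateField.adjoin_simple_toSubalgebra_of_isAlgebraic hsint.isAlgebraic
  have hLles : L ≤ (IntermediateField.adjoin F {(s : E)}).toSubfield := by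
    apply Subfield.closure_le.mpr
    rintro c' (⟨d, rfl⟩ | hc')
    · exact IntermediateField.algebraMap_mem _ d
    · rw [Set.mem_singleton_iff] at hc'
      subst hc'
      rw [hgdef]
      exact mul_mem (IntermediateField.algebraMap_mem _ _)
        (pow_mem (IntermediateField.mem_adjoin_simple_self F ((s : E))) e)
  have h5 := hLles hx
  rw [IntermediateField.mem_toSubfield] at h5
  have h6 : x ∈ (IntermediateField.adjoin F {(s : E)}).toSubalgebra := h5
  rw [hIFs] at h6
  exact h6
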